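/- Let N be odd, a₁ ≠ a₂ in Z/N with a₁ − a₂ invertible mod N, and let S₁, S₂ be the chirps S_j[τ] = (1/√N)e^{(2πi/N)(2⁻¹ a_j τ² + b_j τ)}. Then |⟨S₁, S₂⟩| = 1/√N. -/

import Mathlib

noncomputable def eN (N : ℕ) (x : ZMod N) : ℂ :=
  Complex.exp (2 * Real.pi * Complex.I * (x.val : ℂ) / N)

noncomputable def innerZ (N : ℕ) [NeZero N] (S₁ S₂ : ZMod N → ℂ) : ℂ :=
  ∑ t : ZMod N, S₁ t * (starRingEnd ℂ) (S₂ t)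

noncomputable def chirp (N : ℕ) (a b : ZMod N) : ZMod N → ℂ :=
  fun τ => (1 / Real.sqrt N : ℝ) * eN N ((((N + 1) / 2 : ℕ) : ZMod N) * a * τ ^ 2 + b * τ)

lemma eN_eq_stdAddChar (N : ℕ) [NeZero N] (x : ZMod N) :
    eN N x = ZMod.stdAddChar x := by
  rw [ZMod.stdAddChar_apply, ZMod.toCircle_apply, eN]

lemma conj_stdAddChar (N : ℕ) [NeZero N] (x : ZMod N) :
    (starRingEnd ℂ) (ZMod.stdAddChar x) = ZMod.stdAddChar (-x) := by
  rw [AddChar.map_neg_eq_inv, ZMod.stdAddChar_apply, ZMod.toCircle_apply,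
    ← Complex.exp_conj, ← Complex.exp_neg]
  congr 1
  simp only [map_div₀, map_mul, Complex.conj_I, Complex.conj_ofReal, map_ofNat, map_natCast]
  ring

/-- Cross-correlation of chirps associated to distinct transversal lines has
magnitude 1/√N. -/
theorem chirp_cross_correlation (N : ℕ) [NeZero N] (hN : Odd N)
    (a₁ a₂ b₁ b₂ : ZMod N) (hne : a₁ ≠ a₂) (hunit : IsUnit (a₁ - a₂)) :
    ‖innerZ N (chirp N a₁ b₁) (chirp N a₂ b₂)‖ = 1 / Real.sqrt N := by
  have hNpos : 0 < (N : ℝ) := by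
    exact_mod_cast Nat.pos_of_ne_zero (NeZero.ne N)
  set ψ := ZMod.stdAddChar (N := N) with hψ
  set c : ZMod N := (((N + 1) / 2 : ℕ) : ZMod N) with hc
  have h2c : 2 * c = 1 := by
    have hnat : (2 * ((N + 1) / 2) : ℕ) = N + 1 := by
      obtain ⟨k, hk⟩ := hN; omega
    have : ((2 * ((N + 1) / 2) : ℕ) : ZMod N) = ((N + 1 : ℕ) : ZMod N) := by rw [hnat]
    push_cast at this
    simpa [ZMod.natCast_self, hc] using this
  set e : ZMod N := c * (a₁ - a₂) with he
  set d : ZMod N := b₁ - b₂ with hd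
  have h2e : 2 * e = a₁ - a₂ := by
    rw [he, ← mul_assoc, h2c, one_mul]
  set S : ℂ := ∑ t : ZMod N, ψ (e * t ^ 2 + d * t) with hS
  have hinner : innerZ N (chirp N a₁ b₁) (chirp N a₂ b₂) = ((1 / N : ℝ) : ℂ) * S := by
    rw [hS, Finset.mul_sum, innerZ]
    refine Finset.sum_congr rfl fun t _ => ?_
    simp only [chirp, eN_eq_stdAddChar, map_mul, Complex.conj_ofReal, conj_stdAddChar]
    rw [show (1 / Real.sqrt N : ℝ) * ψ (c * a₁ * t ^ 2 + b₁ * t) *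
        ((1 / Real.sqrt N : ℝ) * ψ (-(c * a₂ * t ^ 2 + b₂ * t)))
        = (((1 / Real.sqrt N : ℝ) * (1 / Real.sqrt N : ℝ) : ℝ) : ℂ) *
          (ψ (c * a₁ * t ^ 2 + b₁ * t) * ψ (-(c * a₂ * t ^ 2 + b₂ * t))) by
      push_cast; ring]
    rw [← AddChar.map_add_eq_mul]
    congr 2
    · rw [one_div_mul_one_div, Real.mul_self_sqrt hNpos.le]
    · rw [he, hd]; ring
  have key : ∀ u : ZMod N, (∑ s : ZMod N, ψ (s * (2 * e * u)))
      = if 2 * e * u = 0 then (Fintype.card (ZMod N) : ℂ) else 0 := by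
    intro u
    exact_mod_cast AddChar.sum_mulShift (ψ := ψ) (2 * e * u) (ZMod.isPrimitive_stdAddChar N)
  have hSS : S * (starRingEnd ℂ) S = (N : ℂ) := by
    rw [hS, map_sum]
    simp only [hψ, conj_stdAddChar]
    rw [Finset.sum_mul_sum]
    have reindex : ∀ s : ZMod N, ∑ t : ZMod N,
        ψ (e * t ^ 2 + d * t) * ψ (-(e * s ^ 2 + d * s))
        = ∑ u : ZMod N, ψ (e * u ^ 2 + d * u + u * (s * (2 * e))) := by
      intro s
      refine (Fintype.sum_equiv (Equiv.addLeft s) _ _ fun u => ?_).symm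
      rw [← AddChar.map_add_eq_mul]
      congr 1
      simp only [Equiv.coe_addLeft]
      ring
    rw [Finset.sum_comm]
    simp only [← hψ, reindex]
    rw [Finset.sum_comm]
    have inner_eq : ∀ u : ZMod N, ∑ s : ZMod N, ψ (e * u ^ 2 + d * u + u * (s * (2 * e)))
        = ψ (e * u ^ 2 + d * u) * (if 2 * e * u = 0 then (Fintype.card (ZMod N) : ℂ) else 0) := by
      intro u
      rw [← key u, Finset.mul_sum]
      refine Finset.sum_congr rfl fun s _ => ?_
      rw [← AddChar.map_add_eq_mul]
      congr 1
      ring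
    simp only [inner_eq]
    have hcond : ∀ u : ZMod N, (2 * e * u = 0) ↔ (u = 0) := by
      intro u
      constructor
      · intro h
        have h' : (a₁ - a₂) * u = 0 := by rw [← h2e]; exact h
        exact (IsUnit.mul_right_eq_zero hunit).mp h'
      · intro h; rw [h, mul_zero]
    simp only [hcond, mul_ite, mul_zero]
    rw [Finset.sum_ite_eq' Finset.univ (0 : ZMod N)
      (fun u => ψ (e * u ^ 2 + d * u) * (Fintype.card (ZMod N) : ℂ))]
    simp [ZMod.card]
  have habsS : ‖S‖ = Real.sqrt N := by
    have : (Complex.normSq S : ℂ) = (N : ℂ) := by rw [← Complex.mul_conj, hSS]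
    have hn : Complex.normSq S = (N : ℝ) := by exact_mod_cast this
    rw [Complex.norm_def, hn]
  rw [hinner, norm_mul, Complex.norm_real, Real.norm_eq_abs, habsS, abs_of_pos (by positivity : (0:ℝ) < 1 / N)]
  rw [eq_div_iff (by positivity : Real.sqrt N ≠ 0), mul_assoc,
    Real.mul_self_sqrt hNpos.le]
  field_simp
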